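/- arXiv:1002.4945 — 2 statements merged into one kernel-verified Lean document; each statement's English description precedes it below -/
import Mathlib

section
/- The coverage probability function of the interval [L_S(Z),1] constructed from an ordered partition satisfies the 1−α level: for every Δ in [−1,1] and every p₀ in D(Δ), P_{(Δ,p₀)}(L_S(Z) ≤ Δ) ≥ 1−α. -/
open Finset
open scoped Classical

noncomputable section

/-- Binomial probability mass function `P(X = x)` for `X ~ Bin(n, p)`. -/
def binomPMF (n : ℕ) (p : ℝ) (x : ℕ) : ℝ :=
  (n.choose x : ℝ) * p ^ x * (1 - p) ^ (n - x)

/-- Probability of a set `T` of sample points under independent `X ~ Bin(n,p₁)`, `Y ~ Bin(m,p₀)`. -/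
def prob (n m : ℕ) (p₁ p₀ : ℝ) (T : Finset (ℕ × ℕ)) : ℝ :=
  ∑ z ∈ T, binomPMF n p₁ z.1 * binomPMF m p₀ z.2

/-- The range `D(Δ)` of the nuisance parameter `p₀`: `[0, 1-Δ]` if `Δ ≥ 0`, `[-Δ, 1]` if `Δ ≤ 0`. -/
def Dset (Δ : ℝ) : Set ℝ :=
  {p₀ | 0 ≤ p₀ ∧ p₀ ≤ 1 ∧ 0 ≤ p₀ + Δ ∧ p₀ + Δ ≤ 1}

/-- The sample space `S = {(x,y) : 0 ≤ x ≤ n, 0 ≤ y ≤ m}`. -/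
def sampleSpace (n m : ℕ) : Finset (ℕ × ℕ) :=
  Finset.range (n + 1) ×ˢ Finset.range (m + 1)

/-- `{C_j}` is an ordered partition of the sample space `S`. -/
def IsOrderedPartition (n m k₀ : ℕ) (C : Fin k₀ → Finset (ℕ × ℕ)) : Prop :=
  (∀ i j : Fin k₀, i ≠ j → Disjoint (C i) (C j)) ∧
  Finset.univ.biUnion C = sampleSpace n m ∧
  ∀ j, (C j).Nonempty

/-- `S_jᶜ`, the complement in `S` of `S_j = ∪_{i ≤ j} C_i`. -/
def SjCompl (n m k₀ : ℕ) (C : Fin k₀ → Finset (ℕ × ℕ)) (j : Fin k₀) : Finset (ℕ × ℕ) :=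
  (sampleSpace n m).filter (fun z => ¬ ∃ i, i ≤ j ∧ z ∈ C i)

/-- `f_j(Δ) = min_{p₀ ∈ D(Δ)} P_{(Δ,p₀)}(S_jᶜ)`. -/
def fj (n m k₀ : ℕ) (C : Fin k₀ → Finset (ℕ × ℕ)) (j : Fin k₀) (Δ : ℝ) : ℝ :=
  sInf ((fun p₀ => prob n m (p₀ + Δ) p₀ (SjCompl n m k₀ C j)) '' Dset Δ)

/-- `G_z = {Δ ∈ [-1,1] : f_j(Δ') ≥ 1-α for all Δ' < Δ}` (for `z ∈ C_j`). -/
def Gj (n m k₀ : ℕ) (α : ℝ) (C : Fin k₀ → Finset (ℕ × ℕ)) (j : Fin k₀) : Set ℝ :=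
  {Δ ∈ Set.Icc (-1 : ℝ) 1 | ∀ Δ' ∈ Set.Ico (-1 : ℝ) Δ, 1 - α ≤ fj n m k₀ C j Δ'}

/-- `L_S` on the block `C_j`: `sup G_z` if `G_z ≠ ∅`, and `-1` otherwise. -/
def LSj (n m k₀ : ℕ) (α : ℝ) (C : Fin k₀ → Finset (ℕ × ℕ)) (j : Fin k₀) : ℝ :=
  if (Gj n m k₀ α C j).Nonempty then sSup (Gj n m k₀ α C j) else -1

lemma binomPMF_nonneg {n : ℕ} {p : ℝ} (h0 : 0 ≤ p) (h1 : p ≤ 1) (x : ℕ) :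
    0 ≤ binomPMF n p x := by
  have h2 : (0:ℝ) ≤ 1 - p := by linarith
  unfold binomPMF
  positivity

lemma sum_binomPMF (n : ℕ) (p : ℝ) :
    ∑ x ∈ Finset.range (n + 1), binomPMF n p x = 1 := by
  have h := add_pow p (1 - p) n
  have h1 : p + (1 - p) = 1 := by ring
  rw [h1, one_pow] at h
  rw [h]
  apply Finset.sum_congr rfl
  intro x _
  unfold binomPMF
  ring

lemma prob_sampleSpace {n m : ℕ} {p₁ p₀ : ℝ} :
    prob n m p₁ p₀ (sampleSpace n m) = 1 := by
  unfold prob sampleSpace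
  rw [Finset.sum_product]
  have : ∀ x ∈ Finset.range (n + 1),
      ∑ y ∈ Finset.range (m + 1), binomPMF n p₁ x * binomPMF m p₀ y
        = binomPMF n p₁ x := by
    intro x _
    rw [← Finset.mul_sum, sum_binomPMF, mul_one]
  rw [Finset.sum_congr rfl this, sum_binomPMF]

lemma prob_nonneg {n m : ℕ} {p₁ p₀ : ℝ} (h10 : 0 ≤ p₁) (h11 : p₁ ≤ 1)
    (h00 : 0 ≤ p₀) (h01 : p₀ ≤ 1) (T : Finset (ℕ × ℕ)) :
    0 ≤ prob n m p₁ p₀ T := by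
  apply Finset.sum_nonneg
  intro z _
  exact mul_nonneg (binomPMF_nonneg h10 h11 _) (binomPMF_nonneg h00 h01 _)

lemma prob_mono {n m : ℕ} {p₁ p₀ : ℝ} (h10 : 0 ≤ p₁) (h11 : p₁ ≤ 1)
    (h00 : 0 ≤ p₀) (h01 : p₀ ≤ 1) {T T' : Finset (ℕ × ℕ)} (hTT : T ⊆ T') :
    prob n m p₁ p₀ T ≤ prob n m p₁ p₀ T' := by
  apply Finset.sum_le_sum_of_subset_of_nonneg hTT
  intro z _ _
  exact mul_nonneg (binomPMF_nonneg h10 h11 _) (binomPMF_nonneg h00 h01 _)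

lemma fj_le {n m k₀ : ℕ} {C : Fin k₀ → Finset (ℕ × ℕ)} {j : Fin k₀} {Δ p₀ : ℝ}
    (hp : p₀ ∈ Dset Δ) :
    fj n m k₀ C j Δ ≤ prob n m (p₀ + Δ) p₀ (SjCompl n m k₀ C j) := by
  apply csInf_le
  · refine ⟨0, ?_⟩
    rintro x ⟨q, hq, rfl⟩
    obtain ⟨h1, h2, h3, h4⟩ := hq
    exact prob_nonneg h3 h4 h1 h2 _
  · exact ⟨p₀, hp, rfl⟩

lemma Gj_nonempty {n m k₀ : ℕ} {α : ℝ} {C : Fin k₀ → Finset (ℕ × ℕ)} {j : Fin k₀} :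
    (Gj n m k₀ α C j).Nonempty := by
  refine ⟨-1, ⟨⟨le_refl _, by norm_num⟩, ?_⟩⟩
  intro Δ' hΔ'
  obtain ⟨h1, h2⟩ := hΔ'
  linarith

lemma Gj_bddAbove {n m k₀ : ℕ} {α : ℝ} {C : Fin k₀ → Finset (ℕ × ℕ)} {j : Fin k₀} :
    BddAbove (Gj n m k₀ α C j) :=
  ⟨1, fun _ hx => hx.1.2⟩

/-- If `Δ < LSj j` and `-1 ≤ Δ`, then `1 - α ≤ fj j Δ`. -/
lemma fj_ge_of_lt_LSj {n m k₀ : ℕ} {α : ℝ} {C : Fin k₀ → Finset (ℕ × ℕ)} {j : Fin k₀}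
    {Δ : ℝ} (hΔ : -1 ≤ Δ) (h : Δ < LSj n m k₀ α C j) :
    1 - α ≤ fj n m k₀ C j Δ := by
  rw [LSj, if_pos Gj_nonempty] at h
  obtain ⟨Δ₀, hΔ₀, hlt⟩ := exists_lt_of_lt_csSup Gj_nonempty h
  exact hΔ₀.2 Δ ⟨hΔ, hlt⟩

/-- The interval `[L_S(Z), 1]` constructed from an ordered partition has
coverage probability at least `1 - α`: for every `Δ ∈ [-1,1]` and every `p₀ ∈ D(Δ)`,
`P_{(Δ,p₀)}(L_S(Z) ≤ Δ) ≥ 1 - α`. -/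
theorem smallest_interval_coverage
    (n m k₀ : ℕ) (α : ℝ) (hα : 0 ≤ α ∧ α < 1)
    (C : Fin k₀ → Finset (ℕ × ℕ)) (hC : IsOrderedPartition n m k₀ C)
    (L : ℕ × ℕ → ℝ) (hL : ∀ j : Fin k₀, ∀ z ∈ C j, L z = LSj n m k₀ α C j) :
    ∀ Δ ∈ Set.Icc (-1 : ℝ) 1, ∀ p₀ ∈ Dset Δ,
      1 - α ≤ prob n m (p₀ + Δ) p₀ ((sampleSpace n m).filter (fun z => L z ≤ Δ)) := by
  intro Δ hΔ p₀ hp₀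
  obtain ⟨hp0, hp1, hd0, hd1⟩ := hp₀
  -- every point of the sample space lies in some block
  have hmem : ∀ z ∈ sampleSpace n m, ∃ i : Fin k₀, z ∈ C i := by
    intro z hz
    rw [← hC.2.1] at hz
    simpa using Finset.mem_biUnion.mp hz
  set J : Finset (Fin k₀) :=
    Finset.univ.filter (fun j => Δ < LSj n m k₀ α C j) with hJdef
  by_cases hJ : J.Nonempty
  · set j₀ := J.max' hJ with hj₀
    have hj₀J : j₀ ∈ J := J.max'_mem hJ
    have hj₀lt : Δ < LSj n m k₀ α C j₀ := (Finset.mem_filter.mp hj₀J).2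
    -- SjCompl j₀ ⊆ filter set
    have hsub : SjCompl n m k₀ C j₀ ⊆
        (sampleSpace n m).filter (fun z => L z ≤ Δ) := by
      intro z hz
      rw [SjCompl, Finset.mem_filter] at hz
      obtain ⟨hzS, hznot⟩ := hz
      obtain ⟨i, hi⟩ := hmem z hzS
      have hij : ¬ i ≤ j₀ := fun h => hznot ⟨i, h, hi⟩
      have hiJ : i ∉ J := fun h => hij (J.le_max' i h)
      have hLe : LSj n m k₀ α C i ≤ Δ := by
        by_contra h
        exact hiJ (Finset.mem_filter.mpr ⟨Finset.mem_univ _, lt_of_not_ge h⟩)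
      refine Finset.mem_filter.mpr ⟨hzS, ?_⟩
      rw [hL i z hi]; exact hLe
    calc 1 - α ≤ fj n m k₀ C j₀ Δ := fj_ge_of_lt_LSj hΔ.1 hj₀lt
      _ ≤ prob n m (p₀ + Δ) p₀ (SjCompl n m k₀ C j₀) := fj_le ⟨hp0, hp1, hd0, hd1⟩
      _ ≤ prob n m (p₀ + Δ) p₀ ((sampleSpace n m).filter (fun z => L z ≤ Δ)) :=
        prob_mono hd0 hd1 hp0 hp1 hsub
  · -- no block has LSj > Δ, so the filter set is all of S
    have hall : (sampleSpace n m).filter (fun z => L z ≤ Δ) = sampleSpace n m := by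
      apply Finset.filter_true_of_mem
      intro z hz
      obtain ⟨i, hi⟩ := hmem z hz
      rw [hL i z hi]
      by_contra h
      exact hJ ⟨i, Finset.mem_filter.mpr ⟨Finset.mem_univ _, lt_of_not_ge h⟩⟩
    rw [hall, prob_sampleSpace]
    linarith [hα.1]
end
end

section
/- If an ordered partition P = {C_j} refines P* = {C*_j} compatibly (each C_j ⊆ C*_{i(j)} with i(j) nondecreasing in j), then the smallest 1−α confidence limit under P dominates that under P*: L*_S(z) ≤ L_S(z) for all z ∈ S. -/
open Finset
open scoped Classical

noncomputable section

lemma prob_nonneg_aux (n m : ℕ) (Δ p₀ : ℝ) (hp : p₀ ∈ Dset Δ) (T : Finset (ℕ × ℕ)) :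
    0 ≤ prob n m (p₀ + Δ) p₀ T := by
  obtain ⟨h1, h2, h3, h4⟩ := hp
  refine Finset.sum_nonneg fun z _ => mul_nonneg ?_ ?_
  · exact mul_nonneg (mul_nonneg (by positivity) (pow_nonneg h3 _))
      (pow_nonneg (by linarith) _)
  · exact mul_nonneg (mul_nonneg (by positivity) (pow_nonneg h1 _))
      (pow_nonneg (by linarith) _)

lemma prob_mono_aux (n m : ℕ) (Δ p₀ : ℝ) (hp : p₀ ∈ Dset Δ) {T T' : Finset (ℕ × ℕ)}
    (hTT : T ⊆ T') : prob n m (p₀ + Δ) p₀ T ≤ prob n m (p₀ + Δ) p₀ T' := by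
  refine Finset.sum_le_sum_of_subset_of_nonneg hTT fun z hz _ => ?_
  have := prob_nonneg_aux n m Δ p₀ hp {z}
  simpa [prob] using this

lemma fj_mono_aux (n m k₀ k₀' : ℕ) (C : Fin k₀ → Finset (ℕ × ℕ))
    (C' : Fin k₀' → Finset (ℕ × ℕ)) (j : Fin k₀) (j' : Fin k₀') (Δ : ℝ)
    (hss : SjCompl n m k₀' C' j' ⊆ SjCompl n m k₀ C j) :
    fj n m k₀' C' j' Δ ≤ fj n m k₀ C j Δ := by
  unfold fj
  rcases Set.eq_empty_or_nonempty (Dset Δ) with hD | hD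
  · simp [hD]
  · apply le_csInf (hD.image _)
    rintro b ⟨p₀, hp₀, rfl⟩
    calc sInf ((fun p₀ => prob n m (p₀ + Δ) p₀ (SjCompl n m k₀' C' j')) '' Dset Δ)
        ≤ prob n m (p₀ + Δ) p₀ (SjCompl n m k₀' C' j') := by
          apply csInf_le ?_ (Set.mem_image_of_mem _ hp₀)
          exact ⟨0, by rintro x ⟨q, hq, rfl⟩; exact prob_nonneg_aux n m Δ q hq _⟩
      _ ≤ prob n m (p₀ + Δ) p₀ (SjCompl n m k₀ C j) := prob_mono_aux n m Δ p₀ hp₀ hss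

/-- **Proposition 2.** If an ordered partition `P = {C_j}` refines
`P* = {C*_j}` compatibly (each `C_j ⊆ C*_{i(j)}` with `i(j)` nondecreasing), then the
smallest `1 - α` confidence limit under `P` dominates that under `P*`:
`L*_S(z) ≤ L_S(z)` for all `z ∈ S`. -/
theorem refinement_dominates
    (n m k₀ k₀' : ℕ) (α : ℝ) (hα : 0 ≤ α ∧ α < 1)
    (C : Fin k₀ → Finset (ℕ × ℕ)) (hC : IsOrderedPartition n m k₀ C)
    (C' : Fin k₀' → Finset (ℕ × ℕ)) (hC' : IsOrderedPartition n m k₀' C')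
    (ι : Fin k₀ → Fin k₀') (hι : Monotone ι) (hsub : ∀ j : Fin k₀, C j ⊆ C' (ι j)) :
    ∀ (j : Fin k₀) (j' : Fin k₀'), ∀ z ∈ C j, z ∈ C' j' →
      LSj n m k₀' α C' j' ≤ LSj n m k₀ α C j := by
  intro j j' z hz hz'
  -- j' = ι j
  have hj' : j' = ι j := by
    by_contra hne
    have := (hC'.1 j' (ι j) hne).le_bot (Finset.mem_inter.mpr ⟨hz', hsub j hz⟩)
    simp at this
  subst hj'
  -- SjCompl inclusion
  have hss : SjCompl n m k₀' C' (ι j) ⊆ SjCompl n m k₀ C j := by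
    intro w hw
    rw [SjCompl, Finset.mem_filter] at hw ⊢
    refine ⟨hw.1, ?_⟩
    rintro ⟨i, hij, hwi⟩
    exact hw.2 ⟨ι i, hι hij, hsub i hwi⟩
  -- Gj inclusion
  have hG : Gj n m k₀' α C' (ι j) ⊆ Gj n m k₀ α C j := by
    rintro Δ ⟨hΔ, hfa⟩
    exact ⟨hΔ, fun Δ' hΔ' =>
      le_trans (hfa Δ' hΔ') (fj_mono_aux n m k₀ k₀' C C' j (ι j) Δ' hss)⟩
  have hbdd : BddAbove (Gj n m k₀ α C j) :=
    ⟨1, fun x hx => hx.1.2⟩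
  unfold LSj
  by_cases hne : (Gj n m k₀' α C' (ι j)).Nonempty
  · have hne' : (Gj n m k₀ α C j).Nonempty := hne.mono hG
    rw [if_pos hne, if_pos hne']
    exact csSup_le_csSup hbdd hne hG
  · rw [if_neg hne]
    by_cases hne' : (Gj n m k₀ α C j).Nonempty
    · rw [if_pos hne']
      obtain ⟨x, hx⟩ := hne'
      exact le_trans hx.1.1 (le_csSup hbdd hx)
    · rw [if_neg hne']
end
end
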